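/- arXiv:2404.12989 — 5 statements merged into one kernel-verified Lean document; each statement's English description precedes it below -/
import Mathlib

section
/- Let A be a p×t matrix and B a t×q matrix of formal power series over ℝ. Then Lace(AB) = Lace(A)·Lace(B), where the matrix product on the right is the product of ℤ×ℤ matrices (which is well defined since the matrices are supported on finitely many entries in each row below any fixed column). -/
open scoped BigOperators

/-- The coefficient of `x^n` in a power series, for an integer `n`
(zero when `n < 0`). -/
noncomputable def intCoeff (A : PowerSeries ℝ) (n : ℤ) : ℝ :=
  if 0 ≤ n then PowerSeries.coeff (R := ℝ) n.toNat A else 0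

/-- A `ℤ × ℤ` matrix is totally positive (TP) if every finite square
submatrix (rows and columns chosen in increasing order) has nonnegative
determinant. -/
def TP (M : ℤ → ℤ → ℝ) : Prop :=
  ∀ (n : ℕ) (r c : Fin n → ℤ), StrictMono r → StrictMono c →
    0 ≤ (Matrix.of fun a b => M (r a) (c b)).det

/-- The interlacing matrix `Lace(A)` of a `p × q` matrix of formal power
series: the `(u,v)`-entry, for `u = p·u' + i` (`0 ≤ i < p`) and
`v = q·v' + j` (`0 ≤ j < q`), is the coefficient of `x^(v'-u')` in `A i j`. -/
noncomputable def lace {p q : ℕ} [NeZero p] [NeZero q]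
    (A : Fin p → Fin q → PowerSeries ℝ) : ℤ → ℤ → ℝ := fun u v =>
  intCoeff
    (A ⟨(u % (p : ℤ)).toNat, by
          have hp : (0 : ℤ) < (p : ℤ) := by
            exact_mod_cast Nat.pos_of_ne_zero (NeZero.ne p)
          have h1 := Int.emod_nonneg u hp.ne'
          have h2 := Int.emod_lt_of_pos u hp
          omega⟩
       ⟨(v % (q : ℤ)).toNat, by
          have hq : (0 : ℤ) < (q : ℤ) := by
            exact_mod_cast Nat.pos_of_ne_zero (NeZero.ne q)
          have h1 := Int.emod_nonneg v hq.ne'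
          have h2 := Int.emod_lt_of_pos v hq
          omega⟩)
    (v / (q : ℤ) - u / (p : ℤ))

/-- A matrix of formal power series is fully interlacing when its
interlacing matrix is totally positive. -/
def FullyInterlacing {p q : ℕ} [NeZero p] [NeZero q]
    (A : Fin p → Fin q → PowerSeries ℝ) : Prop :=
  TP (lace A)

/-- A sequence of power series viewed as a `p × 1` column matrix. -/
noncomputable def colMat {p : ℕ} (A : Fin p → PowerSeries ℝ) :
    Fin p → Fin 1 → PowerSeries ℝ := fun i _ => A i

/-- `A(x)` interlaces `B(x)`: the `2 × 1` column `(A, B)ᵀ` is fully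
interlacing. -/
def SeriesInterlaces (A B : PowerSeries ℝ) : Prop :=
  FullyInterlacing (colMat ![A, B])

/-- A power series is AESW (a Pólya frequency sequence) when its Toeplitz
matrix `(a_{v-u})` is totally positive. -/
def IsAESW (A : PowerSeries ℝ) : Prop :=
  TP fun u v => intCoeff A (v - u)

/-- The `k`-th Veronese `r`-section `S_k^{(r)} A(x) = ∑_{n ≥ 0} a_{k+rn} xⁿ`. -/
noncomputable def veronese (r k : ℕ) (A : PowerSeries ℝ) : PowerSeries ℝ :=
  PowerSeries.mk fun n => PowerSeries.coeff (R := ℝ) (k + r * n) A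

lemma intCoeff_sum {ι : Type*} (s : Finset ι) (f : ι → PowerSeries ℝ) (n : ℤ) :
    intCoeff (∑ k ∈ s, f k) n = ∑ k ∈ s, intCoeff (f k) n := by
  unfold intCoeff
  split
  · simp
  · simp

lemma intCoeff_mul (F G : PowerSeries ℝ) (n : ℤ) :
    intCoeff (F * G) n = ∑' d : ℤ, intCoeff F d * intCoeff G (n - d) := by
  by_cases hn : 0 ≤ n
  · have h0 : ∀ d ∉ Finset.Icc (0:ℤ) n, intCoeff F d * intCoeff G (n - d) = 0 := by
      intro d hd
      simp only [Finset.mem_Icc, not_and_or, not_le] at hd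
      rcases hd with h | h
      · simp [intCoeff, not_le.2 h]
      · simp [intCoeff, show ¬ (0 ≤ n - d) by omega]; intros; omega
    rw [tsum_eq_sum h0, show intCoeff (F*G) n = PowerSeries.coeff (R := ℝ) n.toNat (F*G) from if_pos hn,
        PowerSeries.coeff_mul, Finset.Nat.sum_antidiagonal_eq_sum_range_succ_mk]
    refine Finset.sum_bij' (fun k _ => (k : ℤ)) (fun d _ => d.toNat) ?_ ?_ ?_ ?_ ?_
    · intro a ha
      simp only [Finset.mem_range] at ha
      simp only [Finset.mem_Icc]
      omega
    · intro d hd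
      simp only [Finset.mem_Icc] at hd
      simp only [Finset.mem_range]
      omega
    · intro a ha
      show ((a : ℤ)).toNat = a
      omega
    · intro d hd
      simp only [Finset.mem_Icc] at hd
      show ((d.toNat : ℤ)) = d
      omega
    · intro a ha
      simp only [Finset.mem_range] at ha
      show _ = intCoeff F (a : ℤ) * intCoeff G (n - (a : ℤ))
      simp only [intCoeff, if_pos (by omega : (0:ℤ) ≤ (a:ℤ)),
        if_pos (by omega : (0:ℤ) ≤ n - (a:ℤ))]
      rw [Int.toNat_natCast, show (n - (a:ℤ)).toNat = n.toNat - a by omega]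
  · rw [show intCoeff (F*G) n = 0 from if_neg hn]
    have h : ∀ d : ℤ, intCoeff F d * intCoeff G (n - d) = 0 := by
      intro d
      by_cases hd : 0 ≤ d
      · simp [intCoeff, show ¬ (0 ≤ n - d) by omega]; intros; omega
      · simp [intCoeff, hd]
    simp only [h]
    exact tsum_zero.symm

set_option maxHeartbeats 2000000 in
/-- `Lace(A·B) = Lace(A)·Lace(B)`, where the product of the `ℤ × ℤ`
matrices is taken entrywise as an (absolutely convergent, in fact finitely
supported) sum over `ℤ`. -/
theorem stmt4 {p t q : ℕ} [NeZero p] [NeZero t] [NeZero q]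
    (A : Fin p → Fin t → PowerSeries ℝ) (B : Fin t → Fin q → PowerSeries ℝ) :
    lace (fun i j => ∑ k, A i k * B k j) =
      fun u v => ∑' w : ℤ, lace A u w * lace B w v := by
  have hp : (0:ℤ) < (p:ℤ) := by exact_mod_cast Nat.pos_of_ne_zero (NeZero.ne p)
  have ht : (0:ℤ) < (t:ℤ) := by exact_mod_cast Nat.pos_of_ne_zero (NeZero.ne t)
  have hq : (0:ℤ) < (q:ℤ) := by exact_mod_cast Nat.pos_of_ne_zero (NeZero.ne q)
  funext u v
  have hmod : ∀ (k : Fin t) (m : ℤ), ((t:ℤ) * m + (k:ℤ)) % (t:ℤ) = (k:ℤ) := by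
    intro k m
    have hk : (k:ℤ) < (t:ℤ) := by exact_mod_cast k.2
    rw [add_comm, Int.add_mul_emod_self_left, Int.emod_eq_of_lt (by positivity) hk]
  have hdiv : ∀ (k : Fin t) (m : ℤ), ((t:ℤ) * m + (k:ℤ)) / (t:ℤ) = m := by
    intro k m
    have hk : (k:ℤ) < (t:ℤ) := by exact_mod_cast k.2
    rw [add_comm, Int.add_mul_ediv_left _ _ ht.ne',
      Int.ediv_eq_zero_of_lt (by positivity) hk, zero_add]
  let e : Fin t × ℤ ≃ ℤ :=
    { toFun := fun km => (t:ℤ) * km.2 + (km.1 : ℤ)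
      invFun := fun w => (⟨(w % (t:ℤ)).toNat, by
          have h1 := Int.emod_nonneg w ht.ne'
          have h2 := Int.emod_lt_of_pos w ht
          omega⟩, w / (t:ℤ))
      left_inv := by
        rintro ⟨k, m⟩
        refine Prod.ext (Fin.ext ?_) ?_
        · simp only [hmod]
          exact Int.toNat_natCast k.1
        · simp only [hdiv]
      right_inv := by
        intro w
        have := Int.mul_ediv_add_emod w (t:ℤ)
        simp only
        rw [Int.toNat_of_nonneg (Int.emod_nonneg w ht.ne')]
        omega }
  have hcoe : ∀ km : Fin t × ℤ, e km = (t:ℤ) * km.2 + (km.1 : ℤ) := fun _ => rfl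
  set u' := u / (p:ℤ) with hu'
  set v' := v / (q:ℤ) with hv'
  set i : Fin p := ⟨(u % (p:ℤ)).toNat, by
      have h1 := Int.emod_nonneg u hp.ne'
      have h2 := Int.emod_lt_of_pos u hp
      omega⟩ with hi
  set j : Fin q := ⟨(v % (q:ℤ)).toNat, by
      have h1 := Int.emod_nonneg v hq.ne'
      have h2 := Int.emod_lt_of_pos v hq
      omega⟩ with hj
  set n : ℤ := v' - u' with hn
  set f : ℤ → ℝ := fun w => lace A u w * lace B w v with hf
  have hsupp : ∀ w ∉ Finset.Icc (u' * (t:ℤ)) ((v' + 1) * (t:ℤ) - 1), f w = 0 := by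
    intro w hw
    simp only [Finset.mem_Icc, not_and_or, not_le] at hw
    show lace A u w * lace B w v = 0
    rcases hw with h | h
    · have hlt : w / (t:ℤ) < u' := (Int.ediv_lt_iff_lt_mul ht).mpr h
      have hz : lace A u w = 0 := by
        simp only [lace, intCoeff]
        exact if_neg (by intro hc; rw [hu'] at hlt; linarith)
      rw [hz, zero_mul]
    · have hle : v' + 1 ≤ w / (t:ℤ) := (Int.le_ediv_iff_mul_le ht).mpr (by linarith)
      have hz : lace B w v = 0 := by
        simp only [lace, intCoeff]
        exact if_neg (by intro hc; rw [hv'] at hle; linarith)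
      rw [hz, mul_zero]
  have hfs : Summable f := summable_of_ne_finset_zero hsupp
  show intCoeff (∑ k, A i k * B k j) n = ∑' w, f w
  rw [intCoeff_sum]
  rw [← e.tsum_eq f]
  have hge : Summable (fun km : Fin t × ℤ => f (e km)) := e.summable_iff.2 hfs
  rw [Summable.tsum_prod' hge (fun k => hge.prod_factor k), tsum_fintype]
  refine Finset.sum_congr rfl ?_
  intro k _
  rw [intCoeff_mul]
  conv_rhs => rw [← Equiv.tsum_eq (Equiv.addRight u')]
  refine tsum_congr ?_
  intro d
  have h1 : f (e (k, d + u')) =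
      intCoeff (A i k) (d + u' - u') * intCoeff (B k j) (v' - (d + u')) := by
    show lace A u (e (k, d + u')) * lace B (e (k, d + u')) v = _
    rw [hcoe]
    simp only [lace, hmod, hdiv, Int.toNat_natCast, Fin.eta]
    rfl
  show intCoeff (A i k) d * intCoeff (B k j) (n - d) = f (e (k, (Equiv.addRight u') d))
  rw [show ((Equiv.addRight u') d : ℤ) = d + u' from rfl, h1, add_sub_cancel_right,
    show v' - (d + u') = n - d by rw [hn]; ring]
end

section
/- If A = (A_0(x), ..., A_{p-1}(x)) is a fully interlacing sequence of formal power series in ℝ[[x]], then for all nonnegative reals λ_0, ..., λ_{p-1}, A_0(x) interlaces Σ_i λ_i A_i(x) and Σ_i λ_i A_i(x) interlaces A_{p-1}(x). In particular every series in the nonnegative cone spanned by the A_i is an AESW series (Pólya frequency sequence). -/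
open scoped BigOperators

lemma TP_congr {M N : ℤ → ℤ → ℝ} (h : ∀ u v, M u v = N u v) (hM : TP M) : TP N := by
  intro n r c hr hc
  have : (Matrix.of fun a b => N (r a) (c b)) = (Matrix.of fun a b => M (r a) (c b)) := by
    ext a b; exact (h _ _).symm
  rw [this]; exact hM n r c hr hc

lemma TP_mono_rows {M : ℤ → ℤ → ℝ} (hM : TP M) {n : ℕ} (r c : Fin n → ℤ)
    (hr : Monotone r) (hc : StrictMono c) :
    0 ≤ (Matrix.of fun a b => M (r a) (c b)).det := by
  by_cases hinj : Function.Injective r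
  · exact hM n r c (hr.strictMono_of_injective hinj) hc
  · obtain ⟨a, b, hab, hne⟩ := Function.not_injective_iff.mp hinj
    have : (Matrix.of fun a b => M (r a) (c b)) a = (Matrix.of fun a b => M (r a) (c b)) b := by
      funext j; simp only [Matrix.of_apply, hab]
    exact (Matrix.det_zero_of_row_eq hne this).ge

lemma TP_comb {p : ℕ} [NeZero p] {L : ℤ → ℤ → ℝ} (hL : TP L)
    (Sset : ℤ → Finset (Fin p)) (μ : ℤ → Fin p → ℝ) (hμ : ∀ u i, 0 ≤ μ u i)
    (base : ℤ → ℤ)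
    (hmono : ∀ u u', u < u' → ∀ i ∈ Sset u, ∀ j ∈ Sset u',
      base u + (i : ℤ) ≤ base u' + (j : ℤ)) :
    TP (fun u v => ∑ i ∈ Sset u, μ u i * L (base u + (i : ℤ)) v) := by
  intro n r c hr hc
  have key : (Matrix.of fun a b => ∑ i ∈ Sset (r a), μ (r a) i * L (base (r a) + (i:ℤ)) (c b)).det
      = ∑ f ∈ Fintype.piFinset (fun a => Sset (r a)),
          (∏ a, μ (r a) (f a)) *
            (Matrix.of fun a b => L (base (r a) + ((f a : Fin p) : ℤ)) (c b)).det := by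
    have h1 : (Matrix.of fun a b => ∑ i ∈ Sset (r a), μ (r a) i * L (base (r a) + (i:ℤ)) (c b)).det
        = Matrix.detRowAlternating
            (fun a => ∑ i ∈ Sset (r a), (fun b => μ (r a) i * L (base (r a) + (i:ℤ)) (c b))) := by
      congr 1
      funext a b
      simp [Finset.sum_apply]
    rw [h1]
    have h2 := (Matrix.detRowAlternating (R := ℝ) (n := Fin n)).toMultilinearMap.map_sum_finset
      (g := fun a i => fun b => μ (r a) i * L (base (r a) + (i : ℤ)) (c b))
      (A := fun a => Sset (r a))
    simp only [AlternatingMap.coe_multilinearMap] at h2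
    rw [h2]
    refine Finset.sum_congr rfl fun f _ => ?_
    have h3 : (Matrix.detRowAlternating (R := ℝ) (n := Fin n))
        (fun a => (fun b => μ (r a) (f a) * L (base (r a) + ((f a : Fin p):ℤ)) (c b)))
        = (Matrix.of fun a b => μ (r a) (f a) * L (base (r a) + ((f a : Fin p):ℤ)) (c b)).det := rfl
    rw [h3]; exact Matrix.det_mul_column (fun a => μ (r a) (f a))
      (Matrix.of fun a b => L (base (r a) + ((f a : Fin p) : ℤ)) (c b))
  rw [key]
  refine Finset.sum_nonneg fun f hf => mul_nonneg (Finset.prod_nonneg fun a _ => hμ _ _) ?_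
  refine TP_mono_rows hL (fun a => base (r a) + ((f a : Fin p) : ℤ)) c ?_ hc
  intro a b hab
  rcases lt_or_eq_of_le hab with hlt | heq
  · have hm := Fintype.mem_piFinset.mp hf
    exact hmono (r a) (r b) (hr hlt) (f a) (hm a) (f b) (hm b)
  · rw [heq]


lemma intCoeff_sum_s8 {p : ℕ} (l : Fin p → ℝ) (A : Fin p → PowerSeries ℝ) (m : ℤ) :
    intCoeff (∑ i, l i • A i) m = ∑ i, l i * intCoeff (A i) m := by
  unfold intCoeff
  split
  · simp [smul_eq_mul]
  · simp

lemma lace_col {p : ℕ} [NeZero p] (B : Fin p → PowerSeries ℝ) (w : ℤ) (i : Fin p) (v : ℤ) :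
    lace (colMat B) ((p : ℤ) * w + (i : ℤ)) v = intCoeff (B i) (v - w) := by
  have hp : (0 : ℤ) < (p : ℤ) := by
    exact_mod_cast Nat.pos_of_ne_zero (NeZero.ne p)
  have hi0 : (0 : ℤ) ≤ (i : ℤ) := by positivity
  have hip : (i : ℤ) < (p : ℤ) := by exact_mod_cast i.isLt
  have hmod : ((p : ℤ) * w + (i : ℤ)) % (p : ℤ) = (i : ℤ) := by
    rw [add_comm, Int.add_mul_emod_self_left, Int.emod_eq_of_lt hi0 hip]
  have hdiv : ((p : ℤ) * w + (i : ℤ)) / (p : ℤ) = w := by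
    rw [add_comm, Int.add_mul_ediv_left _ _ hp.ne', Int.ediv_eq_zero_of_lt hi0 hip, zero_add]
  simp only [lace, colMat, hmod, hdiv, Nat.cast_one, Int.ediv_one]
  have hB : (B ⟨((i : ℤ)).toNat, by omega⟩) = B i := congrArg B (Fin.ext (by simp))
  rw [hB]

lemma lace_two (X Y : PowerSeries ℝ) (u v : ℤ) :
    lace (colMat ![X, Y]) u v
      = if u % 2 = 0 then intCoeff X (v - u / 2) else intCoeff Y (v - u / 2) := by
  have key : ∀ (j : Fin 2) (Z : PowerSeries ℝ), ![X, Y] j = Z →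
      (∀ m : ℤ, intCoeff (![X, Y] j) m = intCoeff Z m) := by
    intro j Z hj m; rw [hj]
  rcases (by omega : u % (2 : ℤ) = 0 ∨ u % 2 = 1) with hmod | hmod
  · rw [if_pos hmod]
    simp only [lace, colMat, Nat.cast_one, Int.ediv_one, Nat.cast_ofNat]
    have k0 : ∀ j : Fin 2, (j : ℕ) = 0 → ![X, Y] j = X := by
      intro j hj
      fin_cases j
      · rfl
      · simp at hj
    exact key _ X (k0 _ (by push_cast; omega)) _
  · rw [if_neg (by omega)]
    simp only [lace, colMat, Nat.cast_one, Int.ediv_one, Nat.cast_ofNat]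
    have k1 : ∀ j : Fin 2, (j : ℕ) = 1 → ![X, Y] j = Y := by
      intro j hj
      fin_cases j
      · simp at hj
      · rfl
    exact key _ Y (k1 _ (by push_cast; omega)) _

/-- Convexity: if `(A₀, …, A_{p-1})` is fully interlacing then for all
nonnegative reals `λᵢ`, `A₀ ≺ ∑ λᵢ Aᵢ ≺ A_{p-1}`; in particular every
series in the cone is AESW. -/
theorem stmt8 {p : ℕ} [NeZero p] (A : Fin p → PowerSeries ℝ)
    (h : FullyInterlacing (colMat A)) (l : Fin p → ℝ) (hl : ∀ i, 0 ≤ l i) :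
    SeriesInterlaces (A 0) (∑ i, l i • A i) ∧
    SeriesInterlaces (∑ i, l i • A i)
      (A ⟨p - 1, by have := Nat.pos_of_ne_zero (NeZero.ne p); omega⟩) ∧
    IsAESW (∑ i, l i • A i) := by

  have hp : (0 : ℤ) < (p : ℤ) := by exact_mod_cast Nat.pos_of_ne_zero (NeZero.ne p)
  set S := ∑ i, l i • A i with hS
  set last : Fin p := ⟨p - 1, by have := Nat.pos_of_ne_zero (NeZero.ne p); omega⟩ with hlast
  have divstep : ∀ u u' : ℤ, u / 2 < u' / 2 → ∀ i j : Fin p,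
      (p : ℤ) * (u / 2) + (i : ℤ) ≤ (p : ℤ) * (u' / 2) + (j : ℤ) := by
    intro u u' hc i j
    have hip : (i : ℤ) < (p : ℤ) := by exact_mod_cast i.isLt
    have hj0 : (0 : ℤ) ≤ (j : ℤ) := by positivity
    have h5 : (p : ℤ) * (u / 2 + 1) ≤ (p : ℤ) * (u' / 2) :=
      mul_le_mul_of_nonneg_left (by omega) hp.le
    rw [mul_add, mul_one] at h5
    linarith
  refine ⟨?_, ?_, ?_⟩
  · show TP (lace (colMat ![A 0, S]))
    refine TP_congr (M := fun u v => ∑ i ∈ (if u % 2 = 0 then ({0} : Finset (Fin p))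
        else Finset.univ), (if u % 2 = 0 then (1 : ℝ) else l i) *
          lace (colMat A) ((p : ℤ) * (u / 2) + (i : ℤ)) v) ?_
      (TP_comb h _ _ ?_ (fun u => (p : ℤ) * (u / 2)) ?_)
    · intro u v
      rw [lace_two]
      by_cases h0 : u % 2 = 0
      · simp only [if_pos h0, Finset.sum_singleton, one_mul, lace_col]
      · simp only [if_neg h0, lace_col, hS, intCoeff_sum_s8]
    · intro u i
      split
      · norm_num
      · exact hl i
    · intro u u' huu i hi j hj
      rcases (by omega : u / 2 < u' / 2 ∨ (u / 2 = u' / 2 ∧ u % 2 = 0)) with hc | ⟨hc, he⟩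
      · exact divstep u u' hc i j
      · rw [if_pos he, Finset.mem_singleton] at hi
        have hi0 : (i : ℤ) = 0 := by rw [hi]; simp
        have hj0 : (0 : ℤ) ≤ (j : ℤ) := by positivity
        rw [hc, hi0]
        linarith
  · show TP (lace (colMat ![S, A last]))
    refine TP_congr (M := fun u v => ∑ i ∈ (if u % 2 = 0 then Finset.univ
        else ({last} : Finset (Fin p))), (if u % 2 = 0 then l i else (1 : ℝ)) *
          lace (colMat A) ((p : ℤ) * (u / 2) + (i : ℤ)) v) ?_
      (TP_comb h _ _ ?_ (fun u => (p : ℤ) * (u / 2)) ?_)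
    · intro u v
      rw [lace_two]
      by_cases h0 : u % 2 = 0
      · simp only [if_pos h0, lace_col, hS, intCoeff_sum_s8]
      · simp only [if_neg h0, Finset.sum_singleton, one_mul, lace_col]
    · intro u i
      split
      · exact hl i
      · norm_num
    · intro u u' huu i hi j hj
      rcases (by omega : u / 2 < u' / 2 ∨ (u / 2 = u' / 2 ∧ u % 2 = 0 ∧ u' % 2 = 1))
        with hc | ⟨hc, he, he'⟩
      · exact divstep u u' hc i j
      · rw [if_neg (by omega), Finset.mem_singleton] at hj
        have hij : (i : ℕ) ≤ (j : ℕ) := by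
          rw [hj, hlast]
          have := i.isLt
          simp only []
          omega
        have : (i : ℤ) ≤ (j : ℤ) := by exact_mod_cast hij
        rw [hc]
        linarith
  · show TP fun u v => intCoeff S (v - u)
    refine TP_congr (M := fun u v => ∑ i ∈ (Finset.univ : Finset (Fin p)),
        l i * lace (colMat A) ((p : ℤ) * u + (i : ℤ)) v) ?_
      (TP_comb h _ _ (fun u i => hl i) (fun u => (p : ℤ) * u) ?_)
    · intro u v
      simp only [lace_col, hS, intCoeff_sum_s8]
    · intro u u' huu i hi j hj
      have hip : (i : ℤ) < (p : ℤ) := by exact_mod_cast i.isLt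
      have hj0 : (0 : ℤ) ≤ (j : ℤ) := by positivity
      have h5 : (p : ℤ) * (u + 1) ≤ (p : ℤ) * u' := mul_le_mul_of_nonneg_left (by omega) hp.le
      rw [mul_add, mul_one] at h5
      linarith
end

section
/- If A(x) ∈ ℝ[[x]] is an AESW series and (A_0(x), ..., A_{p-1}(x)) is a fully interlacing sequence of power series, then (A(x)A_0(x), ..., A(x)A_{p-1}(x)) is also fully interlacing. -/
open scoped BigOperators

/-! ### Auxiliary lemmas -/

section Aux

open Finset

lemma perm_strictMono_eq_one {n : ℕ} (σ : Equiv.Perm (Fin n))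
    (h : StrictMono (σ : Fin n → Fin n)) : σ = 1 := by
  have hiso : (StrictMono.orderIsoOfSurjective (σ : Fin n → Fin n) h σ.surjective)
      = OrderIso.refl (Fin n) := Subsingleton.elim _ _
  refine Equiv.ext fun i => ?_
  have := congrArg (fun e => (e : Fin n ≃o Fin n) i) hiso
  simpa using this

lemma sort_unique {n m : ℕ} (f : Fin n → Fin m) (hf : Function.Injective f)
    (σ τ : Equiv.Perm (Fin n)) (hσ : Monotone (f ∘ σ)) (hτ : Monotone (f ∘ τ)) : σ = τ :=
  Equiv.ext fun i => hf (congrFun (Tuple.unique_monotone hσ hτ) i)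

theorem det_expand {n m : ℕ} (P : Matrix (Fin n) (Fin m) ℝ) (Q : Matrix (Fin m) (Fin n) ℝ) :
    (P * Q).det = ∑ g : Fin n → Fin m,
      (∏ i, P i (g i)) * (Q.submatrix g id).det := by
  classical
  have hrow : ((P * Q) : Matrix (Fin n) (Fin n) ℝ) = fun i => ∑ k, P i k • Q k := by
    ext i j; simp [Matrix.mul_apply]
  have key := (Matrix.detRowAlternating :
      (Fin n → ℝ) [⋀^Fin n]→ₗ[ℝ] ℝ).toMultilinearMap.map_sum
      (g := fun i (k : Fin m) => P i k • Q k)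
  calc (P * Q).det
      = (Matrix.detRowAlternating :
      (Fin n → ℝ) [⋀^Fin n]→ₗ[ℝ] ℝ).toMultilinearMap (fun i => ∑ k, P i k • Q k) := by
        rw [hrow]; rfl
    _ = ∑ g : Fin n → Fin m, (Matrix.detRowAlternating :
      (Fin n → ℝ) [⋀^Fin n]→ₗ[ℝ] ℝ).toMultilinearMap (fun i => P i (g i) • Q (g i)) := key
    _ = ∑ g : Fin n → Fin m, (∏ i, P i (g i)) * (Q.submatrix g id).det := by
        refine Finset.sum_congr rfl fun g _ => ?_
        rw [(Matrix.detRowAlternating : (Fin n → ℝ) [⋀^Fin n]→ₗ[ℝ] ℝ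
          ).toMultilinearMap.map_smul_univ (fun i => P i (g i)) (fun i => Q (g i))]
        rw [smul_eq_mul]
        rfl

theorem cauchy_binet {n m : ℕ} (P : Matrix (Fin n) (Fin m) ℝ) (Q : Matrix (Fin m) (Fin n) ℝ) :
    (P * Q).det = ∑ f ∈ Finset.univ.filter (fun f : Fin n → Fin m => StrictMono f),
      (P.submatrix id f).det * (Q.submatrix f id).det := by
  classical
  rw [det_expand]
  rw [← Finset.sum_filter_add_sum_filter_not Finset.univ
      (fun g : Fin n → Fin m => Function.Injective g)]
  have hz : ∑ g ∈ Finset.univ.filter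
      (fun g : Fin n → Fin m => ¬ Function.Injective g),
      (∏ i, P i (g i)) * (Q.submatrix g id).det = 0 := by
    refine Finset.sum_eq_zero fun g hg => ?_
    rw [Finset.mem_filter] at hg
    simp only [Function.Injective] at hg
    push_neg at hg
    obtain ⟨a, b, hab, hne⟩ := hg.2
    have : (Q.submatrix g id).det = 0 :=
      Matrix.det_zero_of_row_eq hne (by ext j; simp [Matrix.submatrix, hab])
    rw [this, mul_zero]
  rw [hz, add_zero]
  have hbij : ∑ g ∈ Finset.univ.filter
      (fun g : Fin n → Fin m => Function.Injective g),
      (∏ i, P i (g i)) * (Q.submatrix g id).det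
    = ∑ p ∈ (Finset.univ.filter (fun f : Fin n → Fin m => StrictMono f)) ×ˢ
        (Finset.univ : Finset (Equiv.Perm (Fin n))),
      (∏ i, P i (p.1 (p.2 i))) * (Q.submatrix (p.1 ∘ p.2) id).det := by
    refine (Finset.sum_nbij' (i := fun g => (g ∘ Tuple.sort g, (Tuple.sort g)⁻¹))
      (j := fun p => p.1 ∘ p.2) ?_ ?_ ?_ ?_ ?_).symm.symm
    · intro g hg
      simp only [Finset.mem_filter, Finset.mem_univ, true_and] at hg ⊢
      rw [Finset.mem_product]
      refine ⟨?_, Finset.mem_univ _⟩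
      simp only [Finset.mem_filter, Finset.mem_univ, true_and]
      exact (Tuple.monotone_sort g).strictMono_of_injective
        (hg.comp (Equiv.injective _))
    · rintro ⟨f, σ⟩ hp
      rw [Finset.mem_product] at hp
      simp only [Finset.mem_filter, Finset.mem_univ, true_and] at hp ⊢
      exact hp.1.injective.comp σ.injective
    · intro g hg
      simp only
      funext i
      simp
    · rintro ⟨f, σ⟩ hp
      rw [Finset.mem_product] at hp
      simp only [Finset.mem_filter, Finset.mem_univ, true_and] at hp
      have hinj : Function.Injective (f ∘ σ) := hp.1.injective.comp σ.injective
      have hsort : Tuple.sort (f ∘ σ) = σ⁻¹ := by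
        refine sort_unique (f ∘ σ) hinj _ _ (Tuple.monotone_sort _) ?_
        have : (f ∘ σ) ∘ (σ⁻¹ : Equiv.Perm (Fin n)) = f := by
          funext i; simp
        rw [this]
        exact hp.1.monotone
      simp only [hsort]
      simp only [Prod.mk.injEq]
      refine ⟨?_, by simp⟩
      funext i; simp
    · intro g hg
      have hgg : (g ∘ ⇑(Tuple.sort g)) ∘ ⇑(Tuple.sort g)⁻¹ = g := by
        funext i; simp
      simp only
      congr 1
      · refine Finset.prod_congr rfl fun i _ => ?_
        simp [Function.comp]
      · rw [hgg]
  rw [hbij, Finset.sum_product]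
  refine Finset.sum_congr rfl fun f hf => ?_
  simp only [Finset.mem_filter, Finset.mem_univ, true_and] at hf
  have hsub : ∀ σ : Equiv.Perm (Fin n),
      (Q.submatrix (f ∘ σ) id).det
        = (Equiv.Perm.sign σ : ℝ) * (Q.submatrix f id).det := by
    intro σ
    have : Q.submatrix (f ∘ σ) id = (Q.submatrix f id).submatrix σ id := by
      ext i j; simp [Matrix.submatrix]
    rw [this, Matrix.det_permute]
  calc ∑ σ : Equiv.Perm (Fin n), (∏ i, P i (f (σ i))) * (Q.submatrix (f ∘ σ) id).det
      = (∑ σ : Equiv.Perm (Fin n), (Equiv.Perm.sign σ : ℝ) * ∏ i, P i (f (σ i)))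
        * (Q.submatrix f id).det := by
        rw [Finset.sum_mul]
        refine Finset.sum_congr rfl fun σ _ => ?_
        rw [hsub σ]; ring
    _ = (P.submatrix id f).det * (Q.submatrix f id).det := by
        congr 1
        rw [← Matrix.det_transpose (P.submatrix id f), Matrix.det_apply']
        refine Finset.sum_congr rfl fun σ _ => ?_
        have h2 : ∏ i, (P.submatrix id f).transpose (σ i) i = ∏ i, P i (f (σ i)) :=
          Finset.prod_congr rfl fun i _ => rfl
        rw [h2]

lemma intCoeff_neg (A : PowerSeries ℝ) {n : ℤ} (h : n < 0) : intCoeff A n = 0 :=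
  if_neg (show ¬ (0 ≤ n) by omega)

lemma intCoeff_mul_s10 (A B : PowerSeries ℝ) (n lo hi : ℤ) (hlo : lo ≤ 0) (hhi : n ≤ hi) :
    intCoeff (A * B) n = ∑ t ∈ Finset.Icc lo hi, intCoeff B t * intCoeff A (n - t) := by
  rcases lt_or_ge n 0 with hn | hn
  · rw [intCoeff_neg _ hn]
    refine (Finset.sum_eq_zero fun t ht => ?_).symm
    rcases lt_or_ge t 0 with h | h
    · rw [intCoeff_neg B h, zero_mul]
    · rw [intCoeff_neg A (show n - t < 0 by omega), mul_zero]
  · have hsub : Finset.Icc (0:ℤ) n ⊆ Finset.Icc lo hi := Finset.Icc_subset_Icc hlo hhi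
    rw [← Finset.sum_subset hsub (fun t ht hnt => by
      simp only [Finset.mem_Icc, not_and, not_le] at ht hnt
      rcases lt_or_ge t 0 with h | h
      · rw [intCoeff_neg B h, zero_mul]
      · rw [intCoeff_neg A (show n - t < 0 by omega), mul_zero])]
    rw [show intCoeff (A*B) n = PowerSeries.coeff (R := ℝ) n.toNat (A*B) from if_pos hn]
    rw [PowerSeries.coeff_mul, Finset.Nat.sum_antidiagonal_eq_sum_range_succ_mk]
    refine Finset.sum_nbij' (i := fun k => n - (k : ℤ)) (j := fun t => (n - t).toNat)
      ?_ ?_ ?_ ?_ ?_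
    · intro k hk
      simp only [Finset.mem_range] at hk
      simp only [Finset.mem_Icc]
      omega
    · intro t ht
      simp only [Finset.mem_Icc] at ht
      simp only [Finset.mem_range]
      omega
    · intro k hk
      simp only [Finset.mem_range] at hk
      show (n - (n - (k:ℤ))).toNat = k
      omega
    · intro t ht
      simp only [Finset.mem_Icc] at ht
      show n - (((n - t).toNat : ℤ)) = t
      omega
    · intro k hk
      simp only [Finset.mem_range] at hk
      rw [show intCoeff B (n - (k:ℤ)) = PowerSeries.coeff (R := ℝ) ((n - (k:ℤ)).toNat) B from
        if_pos (show 0 ≤ n - (k:ℤ) by omega)]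
      rw [show intCoeff A (n - (n - (k:ℤ))) = PowerSeries.coeff (R := ℝ) ((n - (n - (k:ℤ))).toNat) A from
        if_pos (show 0 ≤ n - (n - (k:ℤ)) by omega)]
      rw [show ((n - (k:ℤ)).toNat) = n.toNat - k by omega]
      rw [show ((n - (n - (k:ℤ))).toNat) = k by omega]
      ring

lemma lace_col_s10 {p : ℕ} [NeZero p] (F : Fin p → PowerSeries ℝ) (u v : ℤ) :
    lace (colMat F) u v = intCoeff (F ⟨(u % (p : ℤ)).toNat, by
      have hp : (0 : ℤ) < (p : ℤ) := by
        exact_mod_cast Nat.pos_of_ne_zero (NeZero.ne p)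
      have h1 := Int.emod_nonneg u hp.ne'
      have h2 := Int.emod_lt_of_pos u hp
      omega⟩) (v - u / (p : ℤ)) := by
  unfold lace colMat
  norm_num

lemma sum_Icc_fin (lo hi : ℤ) (m : ℕ) (hm : m = (hi - lo + 1).toNat) (F : ℤ → ℝ) :
    ∑ t ∈ Finset.Icc lo hi, F t = ∑ k : Fin m, F (lo + (k : ℤ)) := by
  refine (Finset.sum_bij (i := fun (k : Fin m) (_ : k ∈ Finset.univ) => lo + (k : ℤ))
    ?_ ?_ ?_ ?_).symm
  · intro k _
    have hk : (k : ℕ) < m := k.isLt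
    simp only [Finset.mem_Icc]
    omega
  · intro k1 _ k2 _ hk
    exact Fin.ext (by omega)
  · intro b hb
    simp only [Finset.mem_Icc] at hb
    refine ⟨⟨(b - lo).toNat, by omega⟩, Finset.mem_univ _, ?_⟩
    simp only
    omega
  · intro k _
    rfl

end Aux

/-- Multiplying every entry of a fully interlacing sequence by a fixed
AESW series yields a fully interlacing sequence. -/
theorem stmt10 {p : ℕ} [NeZero p] (A : PowerSeries ℝ) (hA : IsAESW A)
    (As : Fin p → PowerSeries ℝ) (h : FullyInterlacing (colMat As)) :
    FullyInterlacing (colMat fun i => A * As i) := by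
  classical
  intro n r c hr hc
  match n with
  | 0 => simp [Matrix.det_fin_zero]
  | (n + 1) =>
  have hp : (0 : ℤ) < (p : ℤ) := by
    exact_mod_cast Nat.pos_of_ne_zero (NeZero.ne p)
  set L : ℤ := r 0 / (p : ℤ) with hL
  set hi : ℤ := c (Fin.last n) with hhi
  set m : ℕ := (hi - L + 1).toNat with hm
  set w : Fin m → ℤ := fun k => L + (k : ℤ) with hwdef
  have hw : StrictMono w := by
    intro a b hab
    simp only [hwdef]
    have : (a : ℤ) < (b : ℤ) := by exact_mod_cast hab
    omega
  -- the two factor matrices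
  set P : Matrix (Fin (n+1)) (Fin m) ℝ :=
    Matrix.of (fun a k => lace (colMat As) (r a) (w k)) with hP
  set Q : Matrix (Fin m) (Fin (n+1)) ℝ :=
    Matrix.of (fun k b => intCoeff A (c b - w k)) with hQ
  have hLda : ∀ a : Fin (n+1), L ≤ r a / (p : ℤ) := fun a =>
    Int.ediv_le_ediv hp (hr.monotone (Fin.zero_le a))
  have key : Matrix.of (fun a b => lace (colMat fun i => A * As i) (r a) (c b)) = P * Q := by
    ext a b
    rw [Matrix.mul_apply]
    simp only [Matrix.of_apply, hP, hQ]
    rw [lace_col_s10]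
    simp only [lace_col_s10]
    rw [intCoeff_mul_s10 A (As _) (c b - r a / (p : ℤ)) (L - r a / (p : ℤ)) (hi - r a / (p : ℤ))
      (by have := hLda a; omega)
      (by have : c b ≤ hi := hc.monotone (Fin.le_last b); omega)]
    rw [sum_Icc_fin (L - r a / (p : ℤ)) (hi - r a / (p : ℤ)) m (by omega)]
    refine Finset.sum_congr rfl fun k _ => ?_
    rw [show L - r a / (p : ℤ) + (k : ℤ) = w k - r a / (p : ℤ) by simp [hwdef]; ring]
    rw [show c b - r a / (p : ℤ) - (w k - r a / (p : ℤ)) = c b - w k by ring]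
  rw [key, cauchy_binet]
  refine Finset.sum_nonneg fun f hf => ?_
  simp only [Finset.mem_filter, Finset.mem_univ, true_and] at hf
  have h1 : 0 ≤ (P.submatrix id f).det := h (n+1) r (w ∘ f) hr (hw.comp hf)
  have h2 : 0 ≤ (Q.submatrix f id).det := hA (n+1) (w ∘ f) c (hw.comp hf) hc
  exact mul_nonneg h1 h2
end

section
/- Let A be a p×q fully interlacing matrix of formal power series and r a positive integer. Then the (rp)×q matrix S^{(r)⊥}A obtained by vertically stacking S_{r-1}^{(r)}A, ..., S_1^{(r)}A, S_0^{(r)}A (top to bottom) is fully interlacing; its Lace matrix is the submatrix of Lace(A) consisting of all columns whose index is congruent to one of 0, 1, ..., q-1 modulo rq. -/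
open scoped BigOperators

/-- The vertical stack `S^{(r)⊥} A` of `S_{r-1}^{(r)}A, …, S₀^{(r)}A`
(top to bottom), applied entrywise to a `p × q` matrix of power series. -/
noncomputable def sectMatBot {p q : ℕ} [NeZero p] (r : ℕ)
    (A : Fin p → Fin q → PowerSeries ℝ) : Fin (r * p) → Fin q → PowerSeries ℝ :=
  fun u j => veronese r (r - 1 - (u : ℕ) / p)
    (A ⟨(u : ℕ) % p, Nat.mod_lt _ (Nat.pos_of_ne_zero (NeZero.ne p))⟩ j)


lemma intCoeff_veronese (r k : ℕ) (hk : k < r) (B : PowerSeries ℝ) (n : ℤ) :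
    intCoeff (veronese r k B) n = intCoeff B (k + r * n) := by
  unfold intCoeff veronese
  by_cases hn : 0 ≤ n
  · have h2 : (0:ℤ) ≤ (k:ℤ) + r * n := by positivity
    rw [if_pos hn, if_pos h2, PowerSeries.coeff_mk]
    have hcast : (k:ℤ) + r * n = ((k + r * n.toNat : ℕ) : ℤ) := by
      push_cast [Int.toNat_of_nonneg hn]; ring
    rw [hcast, Int.toNat_natCast]
  · have hk' : (k:ℤ) + 1 ≤ r := by exact_mod_cast hk
    have hn1 : n ≤ -1 := by omega
    have hrn : (r:ℤ) * n ≤ (r:ℤ) * (-1) :=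
      mul_le_mul_of_nonneg_left hn1 (by positivity)
    have h2 : ¬ (0:ℤ) ≤ (k:ℤ) + r * n := by linarith
    rw [if_neg hn, if_neg h2]

lemma lace_apply {p q : ℕ} [NeZero p] [NeZero q] (A : Fin p → Fin q → PowerSeries ℝ)
    (u v : ℤ) (i : Fin p) (j : Fin q)
    (hi : ((i : ℕ) : ℤ) = u % (p : ℤ)) (hj : ((j : ℕ) : ℤ) = v % (q : ℤ)) :
    lace A u v = intCoeff (A i j) (v / (q : ℤ) - u / (p : ℤ)) := by
  unfold lace
  have e1 : (u % (p:ℤ)).toNat = (i:ℕ) := by omega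
  have e2 : (v % (q:ℤ)).toNat = (j:ℕ) := by omega
  simp only [e1, e2, Fin.eta]

lemma lace_sectMatBot {p q : ℕ} [NeZero p] [NeZero q] (r : ℕ) [NeZero r]
    (A : Fin p → Fin q → PowerSeries ℝ) (u v : ℤ) :
    lace (sectMatBot r A) u v
      = lace A (u - (p:ℤ) * ((r:ℤ) - 1))
          ((q:ℤ) * ((r:ℤ) * (v / (q:ℤ))) + v % (q:ℤ)) := by
  have hp : (0:ℤ) < (p:ℤ) := by exact_mod_cast Nat.pos_of_ne_zero (NeZero.ne p)
  have hq : (0:ℤ) < (q:ℤ) := by exact_mod_cast Nat.pos_of_ne_zero (NeZero.ne q)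
  have hr : (0:ℤ) < (r:ℤ) := by exact_mod_cast Nat.pos_of_ne_zero (NeZero.ne r)
  have hr1 : 1 ≤ r := Nat.pos_of_ne_zero (NeZero.ne r)
  have hcast : ((r*p : ℕ) : ℤ) = (r:ℤ) * (p:ℤ) := by push_cast; ring
  have hrp : (0:ℤ) < ((r*p : ℕ) : ℤ) := by rw [hcast]; positivity
  set m : ℕ := (u % ((r*p : ℕ) : ℤ)).toNat with hmdef
  have hm1 : (m:ℤ) = u % ((r*p : ℕ) : ℤ) :=
    Int.toNat_of_nonneg (Int.emod_nonneg u hrp.ne')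
  have hmlt : m < r * p := by
    have := Int.emod_lt_of_pos u hrp
    omega
  have hj0 : 0 ≤ v % (q:ℤ) := Int.emod_nonneg v hq.ne'
  have hjlt : v % (q:ℤ) < (q:ℤ) := Int.emod_lt_of_pos v hq
  set j : Fin q := ⟨(v % (q:ℤ)).toNat, by omega⟩ with hjdef
  have hppos : 0 < p := Nat.pos_of_ne_zero (NeZero.ne p)
  set i1 : Fin p := ⟨m % p, Nat.mod_lt _ hppos⟩ with hi1def
  -- column index of RHS
  have hVmod : ((j : ℕ) : ℤ) = ((q:ℤ) * ((r:ℤ) * (v / (q:ℤ))) + v % (q:ℤ)) % (q:ℤ) := by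
    have h1 : ((q:ℤ) * ((r:ℤ) * (v / (q:ℤ))) + v % (q:ℤ)) % (q:ℤ)
        = (v % (q:ℤ) + (q:ℤ) * ((r:ℤ) * (v / (q:ℤ)))) % (q:ℤ) := by ring_nf
    rw [h1, Int.add_mul_emod_self_left, Int.emod_emod_of_dvd v dvd_rfl]
    simp [hjdef]
    omega
  -- row index of RHS
  have hUmod : ((i1 : ℕ) : ℤ) = (u - (p:ℤ) * ((r:ℤ) - 1)) % (p:ℤ) := by
    have h1 : (u - (p:ℤ) * ((r:ℤ) - 1)) % (p:ℤ) = u % (p:ℤ) := by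
      rw [sub_eq_add_neg, ← mul_neg, Int.add_mul_emod_self_left]
    rw [h1, hi1def]
    push_cast [Int.natCast_mod]
    rw [hm1, hcast, Int.emod_emod_of_dvd u (dvd_mul_left (p:ℤ) (r:ℤ))]
  rw [lace_apply (sectMatBot r A) u v ⟨m, hmlt⟩ j (by simpa using hm1)
      (by simp [hjdef]; omega),
    lace_apply A _ _ i1 j hUmod hVmod]
  have hsect : sectMatBot r A ⟨m, hmlt⟩ j
      = veronese r (r - 1 - m / p) (A ⟨m % p, Nat.mod_lt _ hppos⟩ j) := rfl
  rw [hsect, intCoeff_veronese r _ (lt_of_le_of_lt (Nat.sub_le _ _) (Nat.sub_lt hr1 one_pos)) _ _]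
  have hi1 : (⟨m % p, Nat.mod_lt _ hppos⟩ : Fin p) = i1 := rfl
  rw [hi1]
  congr 1
  -- exponent arithmetic
  have hB : m / p < r := by
    rw [Nat.div_lt_iff_lt_mul hppos]; omega
  have f1 : ((r - 1 - m / p : ℕ) : ℤ) = (r:ℤ) - 1 - ((m / p : ℕ) : ℤ) := by
    rw [Nat.sub_sub, Nat.cast_sub (by omega : 1 + m / p ≤ r)]
    push_cast
    ring
  have f3 : ((q:ℤ) * ((r:ℤ) * (v / (q:ℤ))) + v % (q:ℤ)) / (q:ℤ)
      = (r:ℤ) * (v / (q:ℤ)) := by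
    rw [show (q:ℤ) * ((r:ℤ) * (v / (q:ℤ))) + v % (q:ℤ)
        = v % (q:ℤ) + (q:ℤ) * ((r:ℤ) * (v / (q:ℤ))) from by ring,
      Int.add_mul_ediv_left _ _ hq.ne', Int.ediv_eq_zero_of_lt hj0 hjlt, zero_add]
  have f4 : (u - (p:ℤ) * ((r:ℤ) - 1)) / (p:ℤ) = u / (p:ℤ) - ((r:ℤ) - 1) := by
    rw [sub_eq_add_neg, ← mul_neg, mul_comm, Int.add_mul_ediv_right _ _ hp.ne']
    ring
  have f5 : u / (p:ℤ) = (r:ℤ) * (u / ((r:ℤ) * (p:ℤ))) + (m:ℤ) / (p:ℤ) := by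
    conv_lhs => rw [← Int.mul_ediv_add_emod u ((r:ℤ) * (p:ℤ))]
    rw [← hcast, ← hm1, hcast]
    rw [show (r:ℤ) * (p:ℤ) * (u / ((r:ℤ) * (p:ℤ))) + (m:ℤ)
        = (m:ℤ) + (p:ℤ) * ((r:ℤ) * (u / ((r:ℤ) * (p:ℤ)))) from by ring,
      Int.add_mul_ediv_left _ _ hp.ne']
    ring
  rw [f1, f3, f4, f5, hcast]
  push_cast [Int.natCast_div]
  ring

lemma colShift_strictMono {q r : ℕ} (hq : (0:ℤ) < (q:ℤ)) (hr : (0:ℤ) < (r:ℤ)) :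
    StrictMono (fun v : ℤ => (q:ℤ) * ((r:ℤ) * (v / (q:ℤ))) + v % (q:ℤ)) := by
  intro v w h
  have hdiv : v / (q:ℤ) ≤ w / (q:ℤ) := Int.ediv_le_ediv hq h.le
  rcases lt_or_eq_of_le hdiv with hlt | heq
  · have h1 : v / (q:ℤ) + 1 ≤ w / (q:ℤ) := hlt
    have h2 := mul_le_mul_of_nonneg_left h1 (mul_pos hq hr).le
    have h3 := Int.emod_lt_of_pos v hq
    have h4 := Int.emod_nonneg w hq.ne'
    have h5 : (0:ℤ) ≤ (q:ℤ) * ((r:ℤ) - 1) := by nlinarith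
    simp only []
    nlinarith
  · have h3 := Int.emod_def v (q:ℤ)
    have h4 := Int.emod_def w (q:ℤ)
    simp only []
    rw [← heq] at h4 ⊢
    nlinarith

/-- If `A` is fully interlacing then so is `S^{(r)⊥} A`; moreover
`Lace(S^{(r)⊥}A)` is the submatrix of `Lace(A)` consisting of all columns
whose index is congruent to one of `0, 1, …, q-1` modulo `rq` (the column
of index `v = q·v' + j` of `Lace(S^{(r)⊥}A)` is the column of index
`rq·v' + j` of `Lace(A)`, the rows being suitably re-enumerated). -/
theorem stmt14 {p q : ℕ} [NeZero p] [NeZero q] (r : ℕ) [NeZero r]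
    (A : Fin p → Fin q → PowerSeries ℝ) (hA : FullyInterlacing A) :
    FullyInterlacing (sectMatBot r A) ∧
      ∀ u v : ℤ, lace (sectMatBot r A) u v =
        lace A
          ((p : ℤ) * ((r : ℤ) * (u / ((p : ℤ) * (r : ℤ)))
              + (u % ((p : ℤ) * (r : ℤ))) / (p : ℤ) + 1 - (r : ℤ))
            + u % (p : ℤ))
          ((q : ℤ) * ((r : ℤ) * (v / (q : ℤ))) + v % (q : ℤ)) := by
  have hp : (0:ℤ) < (p:ℤ) := by exact_mod_cast Nat.pos_of_ne_zero (NeZero.ne p)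
  have hq : (0:ℤ) < (q:ℤ) := by exact_mod_cast Nat.pos_of_ne_zero (NeZero.ne q)
  have hr : (0:ℤ) < (r:ℤ) := by exact_mod_cast Nat.pos_of_ne_zero (NeZero.ne r)
  have key := lace_sectMatBot r A
  have rowEq : ∀ u : ℤ,
      (p:ℤ) * ((r:ℤ) * (u / ((p:ℤ) * (r:ℤ))) + (u % ((p:ℤ) * (r:ℤ))) / (p:ℤ)
        + 1 - (r:ℤ)) + u % (p:ℤ) = u - (p:ℤ) * ((r:ℤ) - 1) := by
    intro u
    have h1 := Int.mul_ediv_add_emod u ((p:ℤ) * (r:ℤ))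
    have h2 := Int.mul_ediv_add_emod (u % ((p:ℤ) * (r:ℤ))) (p:ℤ)
    have h3 : u % ((p:ℤ) * (r:ℤ)) % (p:ℤ) = u % (p:ℤ) :=
      Int.emod_emod_of_dvd u (dvd_mul_right (p:ℤ) (r:ℤ))
    rw [← h3]
    linear_combination h1 + h2
  constructor
  · intro n rows cols hrows hcols
    have hmono1 : StrictMono (fun a => rows a - (p:ℤ) * ((r:ℤ) - 1)) :=
      fun a b h => sub_lt_sub_right (hrows h) _
    have hmono2 : StrictMono
        (fun b => (q:ℤ) * ((r:ℤ) * (cols b / (q:ℤ))) + cols b % (q:ℤ)) :=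
      (colShift_strictMono hq hr).comp hcols
    have h0 := hA n _ _ hmono1 hmono2
    have heq : (Matrix.of fun a b => lace (sectMatBot r A) (rows a) (cols b))
        = Matrix.of fun a b => lace A (rows a - (p:ℤ) * ((r:ℤ) - 1))
            ((q:ℤ) * ((r:ℤ) * (cols b / (q:ℤ))) + cols b % (q:ℤ)) := by
      ext a b
      exact key (rows a) (cols b)
    rw [heq]
    exact h0
  · intro u v
    rw [key u v, rowEq u]
end

section
/- For n ∈ ℕ, set Q_n(x) = Σ_k C(n,2k) x^k and P_n(x) = Σ_k C(n,2k+1) x^k (the even and odd binomial-coefficient sections of (1+x)^n). Then the polynomial sequence (P_n, P_{n+1}, Q_n, Q_{n+1}) is pairwise interlacing: P_n ≺ P_{n+1} ≺ Q_n ≺ Q_{n+1}, and in particular P_n ≺ Q_n and P_{n+1} ≺ Q_{n+1}. -/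
open scoped BigOperators

/-- `Qₙ(x) = ∑ₖ C(n,2k) xᵏ`, the even 2-section of `(1+x)ⁿ`. -/
noncomputable def Qbin (n : ℕ) : PowerSeries ℝ :=
  PowerSeries.mk fun k => (n.choose (2 * k) : ℝ)

/-- `Pₙ(x) = ∑ₖ C(n,2k+1) xᵏ`, the odd 2-section of `(1+x)ⁿ`. -/
noncomputable def Pbin (n : ℕ) : PowerSeries ℝ :=
  PowerSeries.mk fun k => (n.choose (2 * k + 1) : ℝ)

/- ## Auxiliary machinery for total positivity -/

/-- Binomial coefficient with integer lower index (zero when negative). -/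
noncomputable def binomZ (N : ℕ) (k : ℤ) : ℝ :=
  if 0 ≤ k then (N.choose k.toNat : ℝ) else 0

lemma binomZ_nonneg (N : ℕ) (k : ℤ) : 0 ≤ binomZ N k := by
  unfold binomZ; split <;> positivity

lemma binomZ_succ (N : ℕ) (k : ℤ) :
    binomZ (N + 1) k = binomZ N k + binomZ N (k - 1) := by
  unfold binomZ
  rcases lt_trichotomy k 0 with h | h | h
  · rw [if_neg (by omega), if_neg (by omega), if_neg (by omega)]; ring
  · subst h; norm_num
  · rw [if_pos (by omega), if_pos (by omega), if_pos (by omega)]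
    have h1 : k.toNat = (k - 1).toNat + 1 := by omega
    rw [h1, Nat.choose_succ_succ]
    push_cast; ring

lemma TP_ext {M M' : ℤ → ℤ → ℝ} (h : ∀ u v, M u v = M' u v) (hM : TP M') : TP M := by
  intro n r c hr hc
  have : (Matrix.of fun a b => M (r a) (c b)) = Matrix.of fun a b => M' (r a) (c b) := by
    ext a b; exact h _ _
  rw [this]; exact hM n r c hr hc

lemma TP_sub {M : ℤ → ℤ → ℝ} (hM : TP M) {f g : ℤ → ℤ}
    (hf : StrictMono f) (hg : StrictMono g) : TP fun u v => M (f u) (g v) :=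
  fun n r c hr hc => hM n (f ∘ r) (g ∘ c) (hf.comp hr) (hg.comp hc)

lemma TP_bidiag {M : ℤ → ℤ → ℝ} (h0 : ∀ u v, 0 ≤ M u v)
    (h1 : ∀ u v, M u v ≠ 0 → v = u ∨ v = u + 1) : TP M := by
  intro n
  induction n with
  | zero => intro r c _ _; simp [Matrix.det_fin_zero]
  | succ m ih =>
    intro r c hr hc
    by_cases hcase : c 0 < r 0
    · apply le_of_eq; symm
      apply Matrix.det_eq_zero_of_column_eq_zero 0
      intro a
      by_contra hne
      have ha : r 0 ≤ r a := hr.monotone (Fin.zero_le a)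
      rcases h1 _ _ hne with h | h <;> omega
    · by_cases hcase2 : r 0 + 1 < c 0
      · apply le_of_eq; symm
        apply Matrix.det_eq_zero_of_row_eq_zero 0
        intro b
        by_contra hne
        have hb : c 0 ≤ c b := hc.monotone (Fin.zero_le b)
        rcases h1 _ _ hne with h | h <;> omega
      · by_cases hcase3 : c 0 = r 0
        · rw [Matrix.det_succ_column_zero]
          rw [Finset.sum_eq_single 0]
          · simp only [Fin.val_zero, pow_zero, one_mul, Fin.succAbove_zero, Matrix.of_apply]
            apply mul_nonneg (h0 _ _)
            exact ih (r ∘ Fin.succ) (c ∘ Fin.succ)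
              (hr.comp (Fin.strictMono_succ)) (hc.comp (Fin.strictMono_succ))
          · intro i _ hi
            have h0' : M (r i) (c 0) = 0 := by
              by_contra hne
              have : r 0 < r i := hr (Fin.pos_of_ne_zero hi)
              rcases h1 _ _ hne with h | h <;> omega
            simp [Matrix.of_apply, h0']
          · intro h; exact absurd (Finset.mem_univ _) h
        · have hcase4 : c 0 = r 0 + 1 := by omega
          rw [Matrix.det_succ_row_zero]
          rw [Finset.sum_eq_single 0]
          · simp only [Fin.val_zero, pow_zero, one_mul, Fin.succAbove_zero, Matrix.of_apply]
            apply mul_nonneg (h0 _ _)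
            exact ih (r ∘ Fin.succ) (c ∘ Fin.succ)
              (hr.comp (Fin.strictMono_succ)) (hc.comp (Fin.strictMono_succ))
          · intro j _ hj
            have h0' : M (r 0) (c j) = 0 := by
              by_contra hne
              have : c 0 < c j := hc (Fin.pos_of_ne_zero hj)
              rcases h1 _ _ hne with h | h <;> omega
            simp [Matrix.of_apply, h0']
          · intro h; exact absurd (Finset.mem_univ _) h

lemma det_split {m : ℕ} (s : Finset (Fin m)) :
    ∀ (A B R : Fin m → Fin m → ℝ),
    (Matrix.of fun i j => if i ∈ s then A i j + B i j else R i j).det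
      = ∑ t ∈ s.powerset,
        (Matrix.of fun i j => if i ∈ t then B i j else if i ∈ s then A i j else R i j).det := by
  classical
  induction s using Finset.induction_on with
  | empty =>
    intro A B R
    simp only [Finset.powerset_empty, Finset.sum_singleton, Finset.notMem_empty, if_false]
  | @insert a s ha ih =>
    intro A B R
    have key : (Matrix.of fun i j => if i ∈ insert a s then A i j + B i j else R i j)
        = Matrix.updateRow (Matrix.of fun i j => if i ∈ s then A i j + B i j else R i j) a
            (A a + B a) := by
      ext i j
      by_cases hi : i = a
      · subst hi; simp [Matrix.updateRow_self, Pi.add_apply]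
      · simp [Matrix.updateRow_ne hi, Finset.mem_insert, hi]
    rw [key, Matrix.det_updateRow_add]
    have eA : Matrix.updateRow (Matrix.of fun i j =>
          if i ∈ s then A i j + B i j else R i j) a (A a)
        = Matrix.of fun i j => if i ∈ s then A i j + B i j
            else (fun i j => if i = a then A i j else R i j) i j := by
      ext i j
      by_cases hi : i = a
      · subst hi; simp [Matrix.updateRow_self, ha]
      · simp [Matrix.updateRow_ne hi, hi]
    have eB : Matrix.updateRow (Matrix.of fun i j =>
          if i ∈ s then A i j + B i j else R i j) a (B a)
        = Matrix.of fun i j => if i ∈ s then A i j + B i j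
            else (fun i j => if i = a then B i j else R i j) i j := by
      ext i j
      by_cases hi : i = a
      · subst hi; simp [Matrix.updateRow_self, ha]
      · simp [Matrix.updateRow_ne hi, hi]
    rw [eA, eB, ih, ih]
    rw [Finset.powerset_insert, Finset.sum_union]
    · congr 1
      · apply Finset.sum_congr rfl
        intro t ht
        have hat : a ∉ t := fun h => ha (Finset.mem_powerset.mp ht h)
        congr 1
        ext i j
        by_cases hit : i ∈ t
        · simp [hit]
        · by_cases his : i ∈ s
          · simp [hit, his, Finset.mem_insert, (by rintro rfl; exact ha his : i ≠ a)]
          · by_cases hia : i = a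
            · subst hia; simp [hit, his, Finset.mem_insert]
            · simp [hit, his, hia, Finset.mem_insert]
      · rw [Finset.sum_image]
        · apply Finset.sum_congr rfl
          intro t ht
          have hat : a ∉ t := fun h => ha (Finset.mem_powerset.mp ht h)
          congr 1
          ext i j
          by_cases hia : i = a
          · subst hia; simp [hat, ha, Finset.mem_insert]
          · by_cases hit : i ∈ t
            · simp [hit, Finset.mem_insert, hia]
            · by_cases his : i ∈ s
              · simp [hit, his, Finset.mem_insert, hia]
              · simp [hit, his, hia, Finset.mem_insert]
        · intro t ht t' ht' h
          have hat : a ∉ t := fun hh => ha (Finset.mem_powerset.mp ht hh)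
          have hat' : a ∉ t' := fun hh => ha (Finset.mem_powerset.mp ht' hh)
          have := congrArg (fun u => Finset.erase u a) h
          simpa [Finset.erase_insert hat, Finset.erase_insert hat'] using this
    · rw [Finset.disjoint_left]
      intro t ht ht'
      have hat : a ∉ t := fun hh => ha (Finset.mem_powerset.mp ht hh)
      rcases Finset.mem_image.mp ht' with ⟨t', _, rfl⟩
      exact hat (Finset.mem_insert_self a t')

lemma det_nonneg_aux {M : ℤ → ℤ → ℝ} (hM : TP M) {m : ℕ} {s c : Fin m → ℤ}
    (hs : Monotone s) (hc : StrictMono c) :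
    0 ≤ (Matrix.of fun i j => M (s i) (c j)).det := by
  by_cases hinj : Function.Injective s
  · exact hM m s c (hs.strictMono_of_injective hinj) hc
  · rw [Function.not_injective_iff] at hinj
    obtain ⟨i, j, hij, hne⟩ := hinj
    apply le_of_eq
    symm
    apply Matrix.det_zero_of_row_eq hne
    funext k
    simp [Matrix.of_apply, hij]

lemma TP_rowAdd {N : ℤ → ℤ → ℝ} (hN : TP N) {a b : ℤ → ℝ}
    (ha : ∀ u, 0 ≤ a u) (hb : ∀ u, 0 ≤ b u) :
    TP fun u v => a u * N u v + b u * N (u + 1) v := by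
  classical
  intro m r c hr hc
  have hsplit := det_split (m := m) Finset.univ
      (fun i j => a (r i) * N (r i) (c j))
      (fun i j => b (r i) * N (r i + 1) (c j)) (fun _ _ => (0:ℝ))
  have hL : (Matrix.of fun i j => (fun u v => a u * N u v + b u * N (u + 1) v) (r i) (c j))
      = Matrix.of fun i j => if i ∈ (Finset.univ : Finset (Fin m)) then
          a (r i) * N (r i) (c j) + b (r i) * N (r i + 1) (c j) else 0 := by
    ext i j; simp
  rw [hL, hsplit]
  apply Finset.sum_nonneg
  intro t _
  set v : Fin m → ℝ := fun i => if i ∈ t then b (r i) else a (r i) with hv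
  set B : Matrix (Fin m) (Fin m) ℝ :=
    Matrix.of fun i j => N (r i + (if i ∈ t then 1 else 0)) (c j) with hB
  have hkey : (Matrix.of fun i j =>
        if i ∈ t then b (r i) * N (r i + 1) (c j)
        else if i ∈ (Finset.univ : Finset (Fin m)) then a (r i) * N (r i) (c j) else 0)
      = Matrix.of fun i j => v i * B i j := by
    ext i j
    by_cases hit : i ∈ t <;> simp [hv, hB, hit]
  rw [hkey, Matrix.det_mul_column]
  apply mul_nonneg
  · apply Finset.prod_nonneg
    intro i _
    by_cases hit : i ∈ t <;> simp [hv, hit, ha, hb]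
  · apply det_nonneg_aux hN ?_ hc
    intro i j hij
    show r i + (if i ∈ t then (1:ℤ) else 0) ≤ r j + (if j ∈ t then (1:ℤ) else 0)
    rcases eq_or_lt_of_le hij with rfl | hlt
    · exact le_refl _
    · have h2 : r i < r j := hr hlt
      have h0 : (if i ∈ t then (1:ℤ) else 0) ≤ 1 := by split <;> norm_num
      have h1 : (0:ℤ) ≤ (if j ∈ t then (1:ℤ) else 0) := by split <;> norm_num
      omega

lemma TP_T (N : ℕ) : TP fun u v => binomZ N (v - u) := by
  induction N with
  | zero =>
    apply TP_bidiag (fun u v => binomZ_nonneg _ _)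
    intro u v h
    left
    unfold binomZ at h
    split at h
    · by_contra hne
      apply h
      have hlt : (0:ℕ) < (v - u).toNat := by omega
      simp [Nat.choose_eq_zero_of_lt hlt]
    · exact absurd rfl h
  | succ N ih =>
    apply TP_ext (M' := fun u v => (1:ℝ) * binomZ N (v - u) + (1:ℝ) * binomZ N (v - (u + 1)))
    · intro u v
      rw [binomZ_succ]
      have e : v - (u + 1) = v - u - 1 := by ring
      rw [e]; ring
    · exact TP_rowAdd (N := fun u v => binomZ N (v - u)) ih
        (a := fun _ => 1) (b := fun _ => 1) (fun _ => zero_le_one) (fun _ => zero_le_one)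

lemma sm1 : StrictMono (fun v : ℤ => 2 * v + 1) := by intro x y h; dsimp only; omega
lemma sm0 : StrictMono (fun v : ℤ => 2 * v) := by intro x y h; dsimp only; omega
lemma smsub1 : StrictMono (fun u : ℤ => u - 1) := by intro x y h; dsimp only; omega

lemma intCoeff_Pbin (n : ℕ) (k : ℤ) : intCoeff (Pbin n) k = binomZ n (2 * k + 1) := by
  unfold intCoeff Pbin binomZ
  by_cases h : 0 ≤ k
  · rw [if_pos h, if_pos (by omega), PowerSeries.coeff_mk]
    congr 2
    omega
  · rw [if_neg h, if_neg (by omega)]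

lemma intCoeff_Qbin (n : ℕ) (k : ℤ) : intCoeff (Qbin n) k = binomZ n (2 * k) := by
  unfold intCoeff Qbin binomZ
  by_cases h : 0 ≤ k
  · rw [if_pos h, if_pos (by omega), PowerSeries.coeff_mk]
    congr 2
    omega
  · rw [if_neg h, if_neg (by omega)]

lemma lace_colMat_apply (A B : PowerSeries ℝ) (u v : ℤ) :
    lace (colMat ![A, B]) u v =
      if u % 2 = 0 then intCoeff A (v - u / 2) else intCoeff B (v - u / 2) := by
  unfold lace colMat
  have h1 : ((2 : ℕ) : ℤ) = 2 := by norm_num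
  have h2 : ((1 : ℕ) : ℤ) = 1 := by norm_num
  rcases Int.emod_two_eq u with h | h
  · rw [if_pos h]
    have e0 : (u % ((2:ℕ) : ℤ)).toNat = 0 := by rw [h1, h]; rfl
    simp only [e0, h1, h2, Int.ediv_one]
    congr 1
    simp [show (u % 2).toNat = 0 by omega]
  · rw [if_neg (by omega)]
    have e0 : (u % ((2:ℕ) : ℤ)).toNat = 1 := by rw [h1, h]; rfl
    simp only [e0, h1, h2, Int.ediv_one]
    congr 1
    simp [show (u % 2).toNat = 1 by omega]

lemma emod2_cast_nonneg (u : ℤ) : (0:ℝ) ≤ ((u % 2 : ℤ) : ℝ) := by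
  have := Int.emod_two_eq u
  rcases this with h | h <;> simp [h]

lemma one_sub_emod2_cast_nonneg (u : ℤ) : (0:ℝ) ≤ 1 - ((u % 2 : ℤ) : ℝ) := by
  have := Int.emod_two_eq u
  rcases this with h | h <;> simp [h]

lemma pair_P_Psucc (n : ℕ) : SeriesInterlaces (Pbin n) (Pbin (n + 1)) := by
  show TP (lace (colMat ![Pbin n, Pbin (n + 1)]))
  apply TP_ext (M' := fun u v =>
    ((u % 2 : ℤ) : ℝ) * binomZ n (2 * v + 1 - (u - 1)) + 1 * binomZ n (2 * v + 1 - (u + 1 - 1)))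
  · intro u v
    rcases Int.emod_two_eq u with h | h
    · rw [lace_colMat_apply, if_pos h, intCoeff_Pbin, h]
      have e1 : 2 * v + 1 - (u + 1 - 1) = 2 * (v - u / 2) + 1 := by omega
      rw [e1]; push_cast; ring
    · rw [lace_colMat_apply, if_neg (by omega), intCoeff_Pbin, binomZ_succ, h]
      have e1 : 2 * v + 1 - (u - 1) = 2 * (v - u / 2) + 1 := by omega
      have e2 : 2 * v + 1 - (u + 1 - 1) = 2 * (v - u / 2) + 1 - 1 := by omega
      rw [e1, e2]; push_cast; ring
  · exact TP_rowAdd (N := fun u v => binomZ n (2 * v + 1 - (u - 1)))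
      (TP_sub (TP_T n) smsub1 sm1)
      (a := fun u => ((u % 2 : ℤ) : ℝ)) (b := fun _ => 1)
      (fun u => emod2_cast_nonneg u) (fun _ => zero_le_one)

lemma pair_Psucc_Q (n : ℕ) : SeriesInterlaces (Pbin (n + 1)) (Qbin n) := by
  show TP (lace (colMat ![Pbin (n + 1), Qbin n]))
  apply TP_ext (M' := fun u v =>
    (1 : ℝ) * binomZ n (2 * v + 1 - u) + (1 - ((u % 2 : ℤ) : ℝ)) * binomZ n (2 * v + 1 - (u + 1)))
  · intro u v
    rcases Int.emod_two_eq u with h | h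
    · rw [lace_colMat_apply, if_pos h, intCoeff_Pbin, binomZ_succ, h]
      have e1 : 2 * v + 1 - u = 2 * (v - u / 2) + 1 := by omega
      have e2 : 2 * v + 1 - (u + 1) = 2 * (v - u / 2) + 1 - 1 := by omega
      rw [e1, e2]; push_cast; ring
    · rw [lace_colMat_apply, if_neg (by omega), intCoeff_Qbin, h]
      have e1 : 2 * v + 1 - u = 2 * (v - u / 2) := by omega
      rw [e1]; push_cast; ring
  · exact TP_rowAdd (N := fun u v => binomZ n (2 * v + 1 - u))
      (TP_sub (TP_T n) strictMono_id sm1)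
      (a := fun _ => 1) (b := fun u => 1 - ((u % 2 : ℤ) : ℝ))
      (fun _ => zero_le_one) (fun u => one_sub_emod2_cast_nonneg u)

lemma pair_Q_Qsucc (n : ℕ) : SeriesInterlaces (Qbin n) (Qbin (n + 1)) := by
  show TP (lace (colMat ![Qbin n, Qbin (n + 1)]))
  apply TP_ext (M' := fun u v =>
    ((u % 2 : ℤ) : ℝ) * binomZ n (2 * v - (u - 1)) + 1 * binomZ n (2 * v - (u + 1 - 1)))
  · intro u v
    rcases Int.emod_two_eq u with h | h
    · rw [lace_colMat_apply, if_pos h, intCoeff_Qbin, h]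
      have e1 : 2 * v - (u + 1 - 1) = 2 * (v - u / 2) := by omega
      rw [e1]; push_cast; ring
    · rw [lace_colMat_apply, if_neg (by omega), intCoeff_Qbin, binomZ_succ, h]
      have e1 : 2 * v - (u - 1) = 2 * (v - u / 2) := by omega
      have e2 : 2 * v - (u + 1 - 1) = 2 * (v - u / 2) - 1 := by omega
      rw [e1, e2]; push_cast; ring
  · exact TP_rowAdd (N := fun u v => binomZ n (2 * v - (u - 1)))
      (TP_sub (TP_T n) smsub1 sm0)
      (a := fun u => ((u % 2 : ℤ) : ℝ)) (b := fun _ => 1)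
      (fun u => emod2_cast_nonneg u) (fun _ => zero_le_one)

lemma pair_P_Q (n : ℕ) : SeriesInterlaces (Pbin n) (Qbin n) := by
  show TP (lace (colMat ![Pbin n, Qbin n]))
  apply TP_ext (M' := fun u v => binomZ n (2 * v + 1 - u))
  · intro u v
    rw [lace_colMat_apply]
    rcases Int.emod_two_eq u with h | h
    · rw [if_pos h, intCoeff_Pbin]
      congr 1
      omega
    · rw [if_neg (by omega), intCoeff_Qbin]
      congr 1
      omega
  · exact TP_sub (TP_T n) strictMono_id sm1

lemma pair_P_Qsucc (n : ℕ) : SeriesInterlaces (Pbin n) (Qbin (n + 1)) := by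
  show TP (lace (colMat ![Pbin n, Qbin (n + 1)]))
  apply TP_ext (M' := fun u v =>
    (1 : ℝ) * binomZ n (2 * v + 1 - u) + ((u % 2 : ℤ) : ℝ) * binomZ n (2 * v + 1 - (u + 1)))
  · intro u v
    rcases Int.emod_two_eq u with h | h
    · rw [lace_colMat_apply, if_pos h, intCoeff_Pbin, h]
      have e1 : 2 * v + 1 - u = 2 * (v - u / 2) + 1 := by omega
      rw [e1]; push_cast; ring
    · rw [lace_colMat_apply, if_neg (by omega), intCoeff_Qbin, binomZ_succ, h]
      have e1 : 2 * v + 1 - u = 2 * (v - u / 2) := by omega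
      have e2 : 2 * v + 1 - (u + 1) = 2 * (v - u / 2) - 1 := by omega
      rw [e1, e2]; push_cast; ring
  · exact TP_rowAdd (N := fun u v => binomZ n (2 * v + 1 - u))
      (TP_sub (TP_T n) strictMono_id sm1)
      (a := fun _ => 1) (b := fun u => ((u % 2 : ℤ) : ℝ))
      (fun _ => zero_le_one) (fun u => emod2_cast_nonneg u)

/-- The sequence `(Pₙ, Pₙ₊₁, Qₙ, Qₙ₊₁)` is pairwise interlacing:
`Pₙ ≺ Pₙ₊₁ ≺ Qₙ ≺ Qₙ₊₁`, and in particular `Pₙ ≺ Qₙ` and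
`Pₙ₊₁ ≺ Qₙ₊₁` (and `Pₙ ≺ Qₙ₊₁`). -/
theorem stmt18 (n : ℕ) :
    SeriesInterlaces (Pbin n) (Pbin (n + 1)) ∧
    SeriesInterlaces (Pbin (n + 1)) (Qbin n) ∧
    SeriesInterlaces (Qbin n) (Qbin (n + 1)) ∧
    SeriesInterlaces (Pbin n) (Qbin n) ∧
    SeriesInterlaces (Pbin (n + 1)) (Qbin (n + 1)) ∧
    SeriesInterlaces (Pbin n) (Qbin (n + 1)) := by
  exact ⟨pair_P_Psucc n, pair_Psucc_Q n, pair_Q_Qsucc n, pair_P_Q n,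
    pair_P_Q (n + 1), pair_P_Qsucc n⟩
end
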